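/- Let n ≥ 1 and α > 0. The value min{ S(X) : X an n×n complex positive semidefinite matrix with Re Tr X ≤ α } equals 0 when α ≤ 1, and equals −α·ln α when α ≥ 1. That is: every positive semidefinite X with Re Tr X ≤ α satisfies S(X) ≥ 0 (resp. S(X) ≥ −α·ln α in the second case), and the bound is attained by the zero matrix (resp. by X = α·v·v* for any unit vector v ∈ ℂⁿ). -/

import Mathlib

open Matrix
open scoped ComplexOrder

/-- The matrix logarithm, applying `Real.log` (with `Real.log 0 = 0`) to the eigenvalues of a
Hermitian matrix via the continuous functional calculus (junk value on non-Hermitian input). -/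
noncomputable def matLog {n : ℕ} (M : Matrix (Fin n) (Fin n) ℂ) : Matrix (Fin n) (Fin n) ℂ :=
  cfc Real.log M

/-- The von Neumann entropy `S(X) = −Re Tr(X · log X)`. -/
noncomputable def vnEntropy {n : ℕ} (X : Matrix (Fin n) (Fin n) ℂ) : ℝ :=
  -((X * matLog X).trace).re

lemma contOn {n : ℕ} (X : Matrix (Fin n) (Fin n) ℂ) (f : ℝ → ℝ) :
    ContinuousOn f (spectrum ℝ X) := by
  rw [continuousOn_iff_continuous_restrict]; fun_prop

lemma mul_cfc' {n : ℕ} (X : Matrix (Fin n) (Fin n) ℂ) (hX : X.IsHermitian) (f : ℝ → ℝ) :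
    X * cfc f X = cfc (fun t => t * f t) X := by
  nth_rewrite 1 [← cfc_id ℝ X hX]
  exact (cfc_mul id f X (contOn X _) (contOn X _)).symm

lemma trace_cfc' {n : ℕ} (X : Matrix (Fin n) (Fin n) ℂ) (hX : X.IsHermitian) (f : ℝ → ℝ) :
    (cfc f X).trace = ∑ i, (f (hX.eigenvalues i) : ℂ) := by
  rw [hX.cfc_eq, Matrix.IsHermitian.cfc, Unitary.conjStarAlgAut_apply, trace_mul_cycle,
    Unitary.star_mul_self_of_mem (SetLike.coe_mem hX.eigenvectorUnitary), one_mul,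
    trace_diagonal]
  rfl

lemma vnEntropy_eq {n : ℕ} (X : Matrix (Fin n) (Fin n) ℂ) (hX : X.IsHermitian) :
    vnEntropy X = -∑ i, hX.eigenvalues i * Real.log (hX.eigenvalues i) := by
  rw [vnEntropy, matLog, mul_cfc' X hX, trace_cfc' X hX]
  push_cast
  simp

lemma star_mul_self_eq (z : ℂ) : z * star z = ((‖z‖ ^ 2 : ℝ) : ℂ) := by
  rw [Complex.star_def, Complex.mul_conj]
  norm_cast
  rw [Complex.normSq_eq_norm_sq]

lemma trace_re_eq {n : ℕ} (X : Matrix (Fin n) (Fin n) ℂ) (hX : X.IsHermitian) :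
    (X.trace).re = ∑ i, hX.eigenvalues i := by
  have h := trace_cfc' X hX id
  have h2 : cfc (id : ℝ → ℝ) X = X := cfc_id ℝ X hX
  rw [h2] at h
  rw [h]
  simp

lemma trace_sq_re_eq {n : ℕ} (X : Matrix (Fin n) (Fin n) ℂ) (hX : X.IsHermitian) :
    ((X * X).trace).re = ∑ i, hX.eigenvalues i ^ 2 := by
  have h := mul_cfc' X hX id
  have h2 : cfc (id : ℝ → ℝ) X = X := cfc_id ℝ X hX
  rw [h2] at h
  rw [h, trace_cfc' X hX]
  simp [sq]

/-- **Minimal von Neumann entropy under a trace constraint** (Lemma 13 of the paper,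
minimization part): over positive semidefinite `X` with `Re Tr X ≤ α`, the minimum of `S(X)`
is `0` if `α ≤ 1` (attained at the zero matrix) and `−α ln α` if `α ≥ 1` (attained at
`α·v·v*` for any unit vector `v`). -/
theorem stmt8 {n : ℕ} (hn : 1 ≤ n) (α : ℝ) (hα : 0 < α) :
    (α ≤ 1 →
      (∀ X : Matrix (Fin n) (Fin n) ℂ, X.PosSemidef → (X.trace).re ≤ α → 0 ≤ vnEntropy X)
      ∧ vnEntropy (0 : Matrix (Fin n) (Fin n) ℂ) = 0)
    ∧ (1 ≤ α →
      (∀ X : Matrix (Fin n) (Fin n) ℂ, X.PosSemidef → (X.trace).re ≤ α →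
        -α * Real.log α ≤ vnEntropy X)
      ∧ (∀ v : Fin n → ℂ, (∑ i, ‖v i‖ ^ 2) = 1 →
          (α • Matrix.vecMulVec v (star v)).PosSemidef
          ∧ ((α • Matrix.vecMulVec v (star v)).trace).re ≤ α
          ∧ vnEntropy (α • Matrix.vecMulVec v (star v)) = -α * Real.log α)) := by
  constructor
  · intro hα1
    constructor
    · intro X hX htr
      rw [vnEntropy_eq X hX.1, neg_nonneg]
      have hsum : ∑ i, hX.1.eigenvalues i ≤ 1 := by
        rw [← trace_re_eq X hX.1]; linarith
      refine Finset.sum_nonpos fun i _ => ?_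
      have h0 : 0 ≤ hX.1.eigenvalues i := hX.eigenvalues_nonneg i
      have h1 : hX.1.eigenvalues i ≤ 1 := by
        refine le_trans ?_ hsum
        exact Finset.single_le_sum (fun j _ => hX.eigenvalues_nonneg j) (Finset.mem_univ i)
      have hlog : Real.log (hX.1.eigenvalues i) ≤ 0 := Real.log_nonpos h0 h1
      exact mul_nonpos_of_nonneg_of_nonpos h0 hlog
    · simp [vnEntropy]
  · intro hα1
    constructor
    · intro X hX htr
      rw [vnEntropy_eq X hX.1]
      have hsum : ∑ i, hX.1.eigenvalues i ≤ α := by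
        rw [← trace_re_eq X hX.1]; linarith
      have hlogα : 0 ≤ Real.log α := Real.log_nonneg hα1
      have key : ∑ i, hX.1.eigenvalues i * Real.log (hX.1.eigenvalues i)
          ≤ α * Real.log α := by
        calc ∑ i, hX.1.eigenvalues i * Real.log (hX.1.eigenvalues i)
            ≤ ∑ i, hX.1.eigenvalues i * Real.log α := by
              refine Finset.sum_le_sum fun i _ => ?_
              rcases eq_or_lt_of_le (hX.eigenvalues_nonneg i) with h | h
              · simp [← h]
              · refine mul_le_mul_of_nonneg_left ?_ h.le
                refine Real.log_le_log h ?_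
                refine le_trans ?_ hsum
                exact Finset.single_le_sum (fun j _ => hX.eigenvalues_nonneg j)
                  (Finset.mem_univ i)
          _ = (∑ i, hX.1.eigenvalues i) * Real.log α := by rw [Finset.sum_mul]
          _ ≤ α * Real.log α := mul_le_mul_of_nonneg_right hsum hlogα
      linarith
    · intro v hv
      set P := Matrix.vecMulVec v (star v) with hP
      have hPP : P * P = P := by
        ext i j
        simp only [hP, Matrix.mul_apply, Matrix.vecMulVec_apply, Pi.star_apply]
        have : ∀ k, v i * star (v k) * (v k * star (v j))
            = (v i * star (v j)) * ((‖v k‖ ^ 2 : ℝ) : ℂ) := by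
          intro k
          rw [show v i * star (v k) * (v k * star (v j))
            = (v i * star (v j)) * (v k * star (v k)) by ring, star_mul_self_eq]
        simp_rw [this, ← Finset.mul_sum]
        rw [show ∑ k, ((‖v k‖ ^ 2 : ℝ) : ℂ) = ((∑ k, ‖v k‖ ^ 2 : ℝ) : ℂ) by push_cast; ring]
        rw [hv]
        simp
      have hPtr : P.trace = 1 := by
        rw [Matrix.trace]
        simp only [Matrix.diag_apply, hP, Matrix.vecMulVec_apply, Pi.star_apply]
        rw [show ∑ i, v i * star (v i) = ((∑ i, ‖v i‖ ^ 2 : ℝ) : ℂ) by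
          push_cast
          exact Finset.sum_congr rfl fun i _ => by rw [star_mul_self_eq]; push_cast; ring]
        rw [hv]; norm_num
      have hPsd : (α • P).PosSemidef := by
        set w : Fin n → ℂ := (Real.sqrt α : ℂ) • v with hw
        have hsq : α • P = Matrix.vecMulVec w (star w) := by
          ext i j
          simp only [Matrix.smul_apply, hP, Matrix.vecMulVec_apply, Pi.star_apply, hw,
            Pi.smul_apply, smul_eq_mul, star_mul', Complex.star_def, Complex.conj_ofReal,
            Complex.real_smul]
          rw [show ((Real.sqrt α : ℂ)) * v i * ((Real.sqrt α : ℂ) * (starRingEnd ℂ) (v j))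
            = (((Real.sqrt α * Real.sqrt α : ℝ)) : ℂ) * (v i * (starRingEnd ℂ) (v j)) by
              push_cast; ring]
          rw [Real.mul_self_sqrt hα.le]
        rw [hsq, Matrix.vecMulVec_eq (Fin 1)]
        have hcol : Matrix.replicateCol (Fin 1) w = (Matrix.replicateRow (Fin 1) (star w))ᴴ := by
          ext i j
          simp [Matrix.replicateCol, Matrix.replicateRow, Matrix.conjTranspose_apply]
        rw [hcol]
        exact Matrix.posSemidef_conjTranspose_mul_self _
      have htrX : ((α • P).trace).re = α := by
        rw [Matrix.trace_smul, hPtr]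
        simp [Complex.real_smul]
      refine ⟨hPsd, le_of_eq htrX, ?_⟩
      -- eigenvalue analysis
      have hher := hPsd.1
      set μ := hher.eigenvalues with hμ
      have hμsum : ∑ i, μ i = α := by
        rw [hμ, ← trace_re_eq _ hher, htrX]
      have hXX : (α • P) * (α • P) = (α * α) • P := by
        rw [Matrix.smul_mul, Matrix.mul_smul, hPP, smul_smul]
      have hμsq : ∑ i, μ i ^ 2 = α * α := by
        rw [hμ, ← trace_sq_re_eq _ hher, hXX, Matrix.trace_smul, hPtr]
        simp [Complex.real_smul]
      have hle : ∀ i ∈ Finset.univ, μ i ^ 2 ≤ α * μ i := by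
        intro i _
        have h0 : 0 ≤ μ i := hPsd.eigenvalues_nonneg i
        have h1 : μ i ≤ α := by
          rw [← hμsum]
          exact Finset.single_le_sum (fun j _ => hPsd.eigenvalues_nonneg j)
            (Finset.mem_univ i)
        nlinarith
      have hsumeq : ∑ i, μ i ^ 2 = ∑ i, α * μ i := by
        rw [hμsq, ← Finset.mul_sum, hμsum]
      have heach : ∀ i ∈ Finset.univ, μ i ^ 2 = α * μ i :=
        (Finset.sum_eq_sum_iff_of_le hle).mp hsumeq
      rw [vnEntropy_eq _ hher]
      have hterm : ∀ i ∈ Finset.univ, μ i * Real.log (μ i) = μ i * Real.log α := by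
        intro i hi
        have h := heach i hi
        rcases eq_or_ne (μ i) 0 with h0 | h0
        · simp [h0]
        · have : μ i = α := by
            have := heach i hi
            field_simp [sq] at this
            linarith
          rw [this]
      rw [Finset.sum_congr rfl hterm, ← Finset.sum_mul, hμsum]
      ring
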